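/- Let M be a unitary magma, p an M-clique of arity n ≥ 2, and (x,y) a diagonal of p. Then the crossing number of (x,y) is 0 (no solid diagonal (x',y') satisfies x < x' < y < y' or x' < x < y' < y) if and only if p factors as p = q ∘_x r where q is an M-clique of arity n + x - y + 1 and r is an M-clique of arity y - x. -/
import Mathlib


/-- The partial composition `p ∘_i q` of the clique operad `C M` over a unitary
magma `M`, on cliques encoded as functions `ℕ → ℕ → M` (the relevant values of a
clique of arity `n` being on the arcs `(x, y)` with `1 ≤ x < y ≤ n + 1`). -/
def cliqComp {M : Type*} [Mul M] [One M] (i m : ℕ) (p q : ℕ → ℕ → M) :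
    ℕ → ℕ → M := fun x y =>
  if y ≤ i then p x y
  else if x ≤ i ∧ i < i + m ∧ i + m ≤ y ∧ ¬(x = i ∧ y = i + m) then p x (y - m + 1)
  else if i + m ≤ x then p (x - m + 1) (y - m + 1)
  else if i ≤ x ∧ x < y ∧ y ≤ i + m ∧ ¬(x = i ∧ y = i + m) then q (x - i + 1) (y - i + 1)
  else if x = i ∧ y = i + m then p i (i + 1) * q 1 (m + 1)
  else 1

/-- Let `p` be an `M`-clique of arity `n ≥ 2` and `(x, y)` a diagonal of `p`.
The crossing number of `(x, y)` is `0` (no solid diagonal of `p` crosses it) if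
and only if `p = q ∘_x r` for an `M`-clique `q` of arity `n + x - y + 1` and an
`M`-clique `r` of arity `y - x`.  Here solid means labeled by an element
different from the unit, and equality of cliques is equality on all the arcs
`(a, b)` with `1 ≤ a < b ≤ n + 1`. -/
theorem crossing_zero_iff_decomposable (M : Type) [MulOneClass M]
    (n : ℕ) (hn : 2 ≤ n) (p : ℕ → ℕ → M) (x y : ℕ)
    (hx : 1 ≤ x) (hxy : x < y) (hy : y ≤ n + 1)
    (hne : y ≠ x + 1) (hnb : ¬(x = 1 ∧ y = n + 1)) :
    ((∀ x' y' : ℕ, 1 ≤ x' → x' < y' → y' ≤ n + 1 →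
        y' ≠ x' + 1 → ¬(x' = 1 ∧ y' = n + 1) → p x' y' ≠ 1 →
        ¬(x < x' ∧ x' < y ∧ y < y') ∧ ¬(x' < x ∧ x < y' ∧ y' < y)) ↔
      ∃ q r : ℕ → ℕ → M, ∀ a b : ℕ, 1 ≤ a → a < b → b ≤ n + 1 →
        p a b = cliqComp x (y - x) q r a b) := by
  constructor
  · intro h
    refine ⟨fun a b =>
        if a = x ∧ b = x + 1 then 1
        else if b ≤ x then p a b
        else if a ≤ x then p a (b + (y - x) - 1)
        else p (a + (y - x) - 1) (b + (y - x) - 1),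
      fun a b => p (a + x - 1) (b + x - 1), ?_⟩
    intro a b ha hab hb
    have pc : ∀ (f : ℕ → ℕ → M) a b a' b', a = a' → b = b' → f a b = f a' b' := by
      rintro f a b a' b' rfl rfl; rfl
    simp only [cliqComp]
    split_ifs
    all_goals first
        | rfl
        | (exfalso; omega)
        | (exact absurd (⟨trivial, trivial⟩ : True ∧ True) (by assumption))
        | (rw [one_mul]; exact pc p _ _ _ _ (by omega) (by omega))
        | (exact pc p _ _ _ _ (by omega) (by omega))
        | (by_contra hp
           have hcr := h a b ha hab hb (by omega) (by omega) hp
           omega)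
  · rintro ⟨q, r, hqr⟩ x' y' h1 h2 h3 h4 h5 hs
    constructor <;> intro hc <;>
      · have e := hqr x' y' h1 h2 h3
        simp only [cliqComp] at e
        split_ifs at e <;> first | exact hs e | omega
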